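/- Let C be an arrovian voting system on at least three alternatives and J ⊆ I a strongly decisive set. Then the following are equivalent: (1) J is minimal among strongly decisive sets; (2) J is contained in every strongly decisive set; (3) every j ∈ J has influence: for every profile, if a ≽_i b for all i ∈ J and a ≻_j b, then a ≻ b in the aggregate. -/
import Mathlib


variable {A I : Type*}

/-- A partial preorder: a reflexive and transitive binary relation. -/
def IsPPO (P : A → A → Prop) : Prop := Reflexive P ∧ Transitive P

/-- A linear (total) preorder: reflexive, transitive and complete. -/
def IsLPO (P : A → A → Prop) : Prop := Reflexive P ∧ Transitive P ∧ ∀ a b, P a b ∨ P b a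

/-- A profile of partial preorders. -/
def IsPPOProfile (P : I → A → A → Prop) : Prop := ∀ i, IsPPO (P i)

/-- A profile of linear (total) preorders. -/
def IsLPOProfile (P : I → A → A → Prop) : Prop := ∀ i, IsLPO (P i)

/-- Strict preference. -/
def StrictPref (P : A → A → Prop) (a b : A) : Prop := P a b ∧ ¬ P b a

/-- Indifference. -/
def Indiff (P : A → A → Prop) (a b : A) : Prop := P a b ∧ P b a

/-- The set `A` contains at least three distinct alternatives. -/
def ThreeAlts (A : Type*) : Prop := ∃ a b c : A, a ≠ b ∧ b ≠ c ∧ a ≠ c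

/-- Unanimity. -/
def Unanimity (C : (I → A → A → Prop) → A → A → Prop) : Prop :=
  ∀ P, IsPPOProfile P → ∀ a b : A, (∀ i, P i a b) → C P a b

/-- Independence of irrelevant alternatives. -/
def IIA (C : (I → A → A → Prop) → A → A → Prop) : Prop :=
  ∀ P P' : I → A → A → Prop, IsPPOProfile P → IsPPOProfile P' → ∀ a b : A,
    {i | P i a b} = {i | P' i a b} → {i | P i b a} = {i | P' i b a} →
    (C P a b ↔ C P' a b)

/-- Neutrality: `C (ρ*P) = ρ*(C P)` for every permutation `ρ` of the alternatives. -/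
def Neutrality (C : (I → A → A → Prop) → A → A → Prop) : Prop :=
  ∀ (ρ : Equiv.Perm A) (P : I → A → A → Prop), IsPPOProfile P →
    ∀ x y : A, C (fun i a b => P i (ρ.symm a) (ρ.symm b)) x y ↔ C P (ρ.symm x) (ρ.symm y)

/-- Monotonicity. -/
def Monotonicity (C : (I → A → A → Prop) → A → A → Prop) : Prop :=
  ∀ P P' : I → A → A → Prop, IsPPOProfile P → IsPPOProfile P' → ∀ a b : A,
    {i | P i a b} ⊆ {i | P' i a b} → {i | P' i b a} ⊆ {i | P i b a} →
    C P a b → C P' a b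

/-- `J` is a decisive set: unanimous strict preference on `J` forces weak aggregate preference. -/
def Decisive (C : (I → A → A → Prop) → A → A → Prop) (J : Set I) : Prop :=
  ∀ P, IsPPOProfile P → ∀ a b : A, (∀ j ∈ J, StrictPref (P j) a b) → C P a b

/-- `J` is a strongly decisive set: unanimous weak preference on `J` forces weak aggregate preference. -/
def SDecisive (C : (I → A → A → Prop) → A → A → Prop) (J : Set I) : Prop :=
  ∀ P, IsPPOProfile P → ∀ a b : A, (∀ j ∈ J, P j a b) → C P a b

-- AUX START
def mkRel (a b c : A) (pab pba pbc pcb pac pca : Prop) : A → A → Prop :=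
  fun x y => x = y ∨ (x = a ∧ y = b ∧ pab) ∨ (x = b ∧ y = a ∧ pba) ∨
    (x = b ∧ y = c ∧ pbc) ∨ (x = c ∧ y = b ∧ pcb) ∨
    (x = a ∧ y = c ∧ pac) ∨ (x = c ∧ y = a ∧ pca)

section mkRelLemmas

variable {a b c : A} {pab pba pbc pcb pac pca : Prop}

lemma mkRel_ppo (hab : a ≠ b) (hbc : b ≠ c) (hac : a ≠ c)
    (t1 : pab → pbc → pac) (t3 : pac → pcb → pab) (t4 : pba → pac → pbc)
    (t6 : pbc → pca → pba) (t8 : pca → pab → pcb) (t10 : pcb → pba → pca) :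
    IsPPO (mkRel a b c pab pba pbc pcb pac pca) := by
  constructor
  · intro x; exact Or.inl rfl
  · intro x y z h1 h2
    unfold mkRel at *
    rcases h1 with h1 | ⟨e1, e2, h1⟩ | ⟨e1, e2, h1⟩ | ⟨e1, e2, h1⟩ |
      ⟨e1, e2, h1⟩ | ⟨e1, e2, h1⟩ | ⟨e1, e2, h1⟩ <;>
    rcases h2 with h2 | ⟨f1, f2, h2⟩ | ⟨f1, f2, h2⟩ | ⟨f1, f2, h2⟩ |
      ⟨f1, f2, h2⟩ | ⟨f1, f2, h2⟩ | ⟨f1, f2, h2⟩ <;>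
    subst_vars <;> simp_all

lemma mkRel_ab (hab : a ≠ b) (hbc : b ≠ c) (hac : a ≠ c) :
    mkRel a b c pab pba pbc pcb pac pca a b ↔ pab := by
  simp [mkRel, hab, hbc, hac, hab.symm, hbc.symm, hac.symm]

lemma mkRel_ba (hab : a ≠ b) (hbc : b ≠ c) (hac : a ≠ c) :
    mkRel a b c pab pba pbc pcb pac pca b a ↔ pba := by
  simp [mkRel, hab, hbc, hac, hab.symm, hbc.symm, hac.symm]

lemma mkRel_bc (hab : a ≠ b) (hbc : b ≠ c) (hac : a ≠ c) :
    mkRel a b c pab pba pbc pcb pac pca b c ↔ pbc := by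
  simp [mkRel, hab, hbc, hac, hab.symm, hbc.symm, hac.symm]

lemma mkRel_cb (hab : a ≠ b) (hbc : b ≠ c) (hac : a ≠ c) :
    mkRel a b c pab pba pbc pcb pac pca c b ↔ pcb := by
  simp [mkRel, hab, hbc, hac, hab.symm, hbc.symm, hac.symm]

lemma mkRel_ac (hab : a ≠ b) (hbc : b ≠ c) (hac : a ≠ c) :
    mkRel a b c pab pba pbc pcb pac pca a c ↔ pac := by
  simp [mkRel, hab, hbc, hac, hab.symm, hbc.symm, hac.symm]

lemma mkRel_ca (hab : a ≠ b) (hbc : b ≠ c) (hac : a ≠ c) :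
    mkRel a b c pab pba pbc pcb pac pca c a ↔ pca := by
  simp [mkRel, hab, hbc, hac, hab.symm, hbc.symm, hac.symm]

end mkRelLemmas

/-- Local strong decisiveness on a pair. -/
def SDecAt (C : (I → A → A → Prop) → A → A → Prop) (K : Set I) (x y : A) : Prop :=
  ∀ Q, IsPPOProfile Q → (∀ i ∈ K, Q i x y) → C Q x y

lemma third_alt (hA : ThreeAlts A) (u v : A) : ∃ z : A, z ≠ u ∧ z ≠ v := by
  obtain ⟨a, b, c, hab, hbc, hac⟩ := hA
  by_cases ha : a ≠ u ∧ a ≠ v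
  · exact ⟨a, ha.1, ha.2⟩
  by_cases hb : b ≠ u ∧ b ≠ v
  · exact ⟨b, hb.1, hb.2⟩
  refine ⟨c, fun hcu => ?_, fun hcv => ?_⟩
  · subst hcu
    have hav : a = v := by
      rcases not_and_or.mp ha with h | h
      · exact absurd (not_not.mp h) hac
      · exact not_not.mp h
    have hbv : b = v := by
      rcases not_and_or.mp hb with h | h
      · exact absurd (not_not.mp h) hbc
      · exact not_not.mp h
    exact hab (hav.trans hbv.symm)
  · subst hcv
    have hau : a = u := by
      rcases not_and_or.mp ha with h | h
      · exact not_not.mp h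
      · exact absurd (not_not.mp h) hac
    have hbu : b = u := by
      rcases not_and_or.mp hb with h | h
      · exact not_not.mp h
      · exact absurd (not_not.mp h) hbc
    exact hab (hau.trans hbu.symm)

section Steps

variable {C : (I → A → A → Prop) → A → A → Prop} {K : Set I}

/-- Move the second coordinate. -/
lemma sdecAt_move_snd (hC : ∀ P, IsPPOProfile P → IsPPO (C P))
    (hU : Unanimity C) (hIIA : IIA C) {x y v : A}
    (hxy : x ≠ y) (hvx : v ≠ x) (hvy : v ≠ y)
    (h : SDecAt C K x y) : SDecAt C K x v := by
  intro Q hQ hK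
  set R : I → A → A → Prop := fun i =>
    mkRel x y v (i ∈ K) (Q i v x) True (Q i v x ∧ i ∈ K) (Q i x v) (Q i v x) with hR
  have hRp : IsPPOProfile R := fun i =>
    mkRel_ppo hxy hvy.symm hvx.symm
      (fun hk _ => hK i hk) (fun _ h2 => h2.2) (fun _ _ => trivial)
      (fun _ h2 => h2) (fun h1 h2 => ⟨h1, h2⟩) (fun h1 _ => h1.1)
  have h1 : C R x y := h R hRp (fun i hi => Or.inr (Or.inl ⟨rfl, rfl, hi⟩))
  have h2 : C R y v := hU R hRp y v
    (fun i => Or.inr (Or.inr (Or.inr (Or.inl ⟨rfl, rfl, trivial⟩))))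
  have h3 : C R x v := (hC R hRp).2 h1 h2
  refine (hIIA R Q hRp hQ x v ?_ ?_).mp h3
  · ext i; simpa using mkRel_ac (pab := i ∈ K) (pba := Q i v x) (pbc := True)
      (pcb := Q i v x ∧ i ∈ K) (pca := Q i v x) hxy hvy.symm hvx.symm
  · ext i; simpa using mkRel_ca (pab := i ∈ K) (pba := Q i v x) (pbc := True)
      (pcb := Q i v x ∧ i ∈ K) (pac := Q i x v) hxy hvy.symm hvx.symm

/-- Move the first coordinate. -/
lemma sdecAt_move_fst (hC : ∀ P, IsPPOProfile P → IsPPO (C P))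
    (hU : Unanimity C) (hIIA : IIA C) {x y u : A}
    (hxy : x ≠ y) (hux : u ≠ x) (huy : u ≠ y)
    (h : SDecAt C K x y) : SDecAt C K u y := by
  intro Q hQ hK
  -- triple (a,b,c) = (u,x,y)
  set R : I → A → A → Prop := fun i =>
    mkRel u x y True (i ∈ K ∧ Q i y u) (i ∈ K) (Q i y u) (Q i u y) (Q i y u) with hR
  have hRp : IsPPOProfile R := fun i =>
    mkRel_ppo hux hxy huy
      (fun _ hk => hK i hk) (fun _ _ => trivial) (fun h1 _ => h1.1)
      (fun h1 h2 => ⟨h1, h2⟩) (fun h1 _ => h1) (fun _ h2 => h2.2)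
  have h1 : C R u x := hU R hRp u x (fun i => Or.inr (Or.inl ⟨rfl, rfl, trivial⟩))
  have h2 : C R x y := h R hRp (fun i hi => Or.inr (Or.inr (Or.inr (Or.inl ⟨rfl, rfl, hi⟩))))
  have h3 : C R u y := (hC R hRp).2 h1 h2
  refine (hIIA R Q hRp hQ u y ?_ ?_).mp h3
  · ext i; simpa using mkRel_ac (pab := True) (pba := i ∈ K ∧ Q i y u) (pbc := i ∈ K)
      (pcb := Q i y u) (pca := Q i y u) hux hxy huy
  · ext i; simpa using mkRel_ca (pab := True) (pba := i ∈ K ∧ Q i y u) (pbc := i ∈ K)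
      (pcb := Q i y u) (pac := Q i u y) hux hxy huy

/-- From strong decisiveness at one pair to all pairs. -/
lemma sdecAt_expand (hC : ∀ P, IsPPOProfile P → IsPPO (C P))
    (hU : Unanimity C) (hIIA : IIA C) (hA : ThreeAlts A) {b c : A}
    (hbc : b ≠ c) (h : SDecAt C K b c) : SDecisive C K := by
  intro Q hQ x y hK
  by_cases hxy : x = y
  · subst hxy; exact (hC Q hQ).1 x
  -- step 1: SDecAt C K x w for some w ≠ x
  have step1 : ∃ w, w ≠ x ∧ SDecAt C K x w := by
    by_cases h1 : x = b
    · subst h1; exact ⟨c, hbc.symm, h⟩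
    · by_cases h2 : x = c
      · obtain ⟨z, hzb, hzx⟩ := third_alt hA b x
        have hzc : z ≠ c := fun hh => hzx (hh.trans h2.symm)
        have s1 : SDecAt C K b z := sdecAt_move_snd hC hU hIIA hbc hzb hzc h
        have s2 : SDecAt C K x z := sdecAt_move_fst hC hU hIIA hzb.symm
          h1 (fun hh => hzx hh.symm) s1
        exact ⟨z, hzx, s2⟩
      · exact ⟨c, fun hh => h2 hh.symm,
          sdecAt_move_fst hC hU hIIA hbc h1 h2 h⟩
  obtain ⟨w, hwx, hxw⟩ := step1
  by_cases hyw : y = w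
  · subst hyw; exact hxw Q hQ hK
  · exact sdecAt_move_snd hC hU hIIA hwx.symm (Ne.symm hxy) hyw hxw Q hQ hK

end Steps

theorem minimal_strongly_decisive_tfae [Fintype I] (C : (I → A → A → Prop) → A → A → Prop)
    (hA : ThreeAlts A)
    (hC : ∀ P, IsPPOProfile P → IsPPO (C P))
    (hU : Unanimity C) (hIIA : IIA C)
    (J : Set I) (hJ : SDecisive C J) :
    List.TFAE
      [ ∀ J' : Set I, J' ⊆ J → SDecisive C J' → J' = J,
        ∀ J' : Set I, SDecisive C J' → J ⊆ J',
        ∀ j ∈ J, ∀ P : I → A → A → Prop, IsPPOProfile P →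
          ∀ a b : A, (∀ i ∈ J, P i a b) → StrictPref (P j) a b → StrictPref (C P) a b ] := by
  tfae_have 1 → 3 := by
    intro h1 j hj P hP a b hJab hjst
    have hab : a ≠ b := by rintro rfl; exact hjst.2 ((hP j).1 a)
    refine ⟨hJ P hP a b hJab, fun hba => ?_⟩
    obtain ⟨c, hca, hcb⟩ := third_alt hA a b
    have hbc : b ≠ c := hcb.symm
    have hac : a ≠ c := hca.symm
    have hloc : SDecAt C (J \ {j}) b c := by
      intro Q hQ hK
      set R : I → A → A → Prop := fun i =>
        mkRel a b c (P i a b) (P i b a) (Q i b c) (Q i c b)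
          (i ∈ J ∨ (P i a b ∧ Q i b c)) (Q i c b ∧ P i b a) with hRdef
      have hRp : IsPPOProfile R := fun i =>
        mkRel_ppo hab hbc hac
          (fun h1 h2 => Or.inr ⟨h1, h2⟩)
          (fun h1 _ => h1.elim (fun hi => hJab i hi) And.left)
          (fun h1 h2 => h2.elim
            (fun hi => hK i ⟨hi, fun hji => hjst.2 (hji ▸ h1)⟩) And.right)
          (fun _ h2 => h2.2) (fun h1 _ => h1.1) (fun h1 h2 => ⟨h1, h2⟩)
      have hba' : C R b a := by
        refine (hIIA P R hP hRp b a ?_ ?_).mp hba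
        · ext i
          simp only [Set.mem_setOf_eq, hRdef]
          rw [mkRel_ba hab hbc hac]
        · ext i
          simp only [Set.mem_setOf_eq, hRdef]
          rw [mkRel_ab hab hbc hac]
      have hac2 : C R a c := hJ R hRp a c (fun i hi => by
        simp only [hRdef]
        exact (mkRel_ac hab hbc hac).mpr (Or.inl hi))
      have hbc2 : C R b c := (hC R hRp).2 hba' hac2
      refine (hIIA R Q hRp hQ b c ?_ ?_).mp hbc2
      · ext i
        simp only [Set.mem_setOf_eq, hRdef]
        rw [mkRel_bc hab hbc hac]
      · ext i
        simp only [Set.mem_setOf_eq, hRdef]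
        rw [mkRel_cb hab hbc hac]
    have hfull : SDecisive C (J \ {j}) := sdecAt_expand hC hU hIIA hA hbc hloc
    have heq : J \ {j} = J := h1 _ Set.diff_subset hfull
    have hmem : j ∈ J \ {j} := heq.symm ▸ hj
    exact hmem.2 rfl
  tfae_have 3 → 2 := by
    intro h3 J' hJ' j hj
    by_contra hnot
    obtain ⟨a, b, c, hab, hbc, hac⟩ := hA
    set P : I → A → A → Prop := fun i =>
      mkRel a b c True (i ≠ j) False False False False with hPdef
    have hPp : IsPPOProfile P := fun i =>
      mkRel_ppo hab hbc hac
        (fun _ h => h.elim) (fun h _ => h.elim) (fun _ h => h.elim)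
        (fun h _ => h.elim) (fun h _ => h.elim) (fun h _ => h.elim)
    have hstrict : StrictPref (P j) a b := by
      constructor
      · simp only [hPdef]; exact (mkRel_ab hab hbc hac).mpr trivial
      · simp only [hPdef]
        intro hba
        exact ((mkRel_ba hab hbc hac).mp hba) rfl
    have hres := h3 j hj P hPp a b
      (fun i _ => by simp only [hPdef]; exact (mkRel_ab hab hbc hac).mpr trivial) hstrict
    refine hres.2 (hJ' P hPp b a (fun i hi => ?_))
    simp only [hPdef]
    exact (mkRel_ba hab hbc hac).mpr (fun he => hnot (he ▸ hi))
  tfae_have 2 → 1 := by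
    intro h2 J' hsub hsd
    exact hsub.antisymm (h2 J' hsd)
  tfae_finish
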